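/- arXiv:2002.05330 — 3 statements merged into one kernel-verified Lean document; each statement's English description precedes it below -/
import Mathlib

section
/- Let n ≥ 1, let V₁, …, Vₙ : (Fin n → ℝ) → ℝ satisfy 0 ≤ Vₖ(x) ≤ 1 for all x and all k, and let ε₁, …, εₙ be reals with εₖ ≥ 1 for all k. Suppose b : ℝ → (Fin n → ℝ) is differentiable on [0, ∞) and satisfies bₖ'(t) = Vₖ(b(t)) − εₖ·bₖ(t) for all t ≥ 0 and all k. If b(0) ∈ [0,1]ⁿ, then b(t) ∈ [0,1]ⁿ for all t ≥ 0 (the n-dimensional unit cube is forward invariant for the multi-sided platform model). -/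
/-- The `n`-dimensional unit cube is forward invariant for the
multi-sided platform model `bₖ' = Vₖ(b) − εₖ·bₖ` with attachment functions `Vₖ`
taking values in `[0,1]` and `εₖ ≥ 1`. -/
theorem unit_cube_forward_invariant
    (n : ℕ) (hn : 1 ≤ n)
    (V : Fin n → (Fin n → ℝ) → ℝ)
    (hV : ∀ k x, V k x ∈ Set.Icc (0 : ℝ) 1)
    (ε : Fin n → ℝ) (hε : ∀ k, 1 ≤ ε k)
    (b : ℝ → (Fin n → ℝ))
    (hb : ∀ t, 0 ≤ t → ∀ k, HasDerivAt (fun s => b s k) (V k (b t) - ε k * b t k) t)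
    (hb0 : ∀ k, b 0 k ∈ Set.Icc (0 : ℝ) 1) :
    ∀ t, 0 ≤ t → ∀ k, b t k ∈ Set.Icc (0 : ℝ) 1 := by
  intro t ht k
  set c := ε k with hc
  have hc1 : (1 : ℝ) ≤ c := hε k
  have he : ∀ s : ℝ, HasDerivAt (fun u : ℝ => Real.exp (c * u)) (Real.exp (c * s) * c) s := by
    intro s
    simpa using ((hasDerivAt_id s).const_mul c).exp
  have hg : ∀ s : ℝ, 0 ≤ s →
      HasDerivAt (fun u => Real.exp (c * u) * b u k) (Real.exp (c * s) * V k (b s)) s := by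
    intro s hs
    have : HasDerivAt (fun u => Real.exp (c * u) * b u k) _ s := (he s).mul (hb s hs k)
    convert this using 1
    rw [hc]
    ring
  -- lower bound
  have hmono : MonotoneOn (fun u => Real.exp (c * u) * b u k) (Set.Icc 0 t) := by
    apply monotoneOn_of_deriv_nonneg (convex_Icc 0 t)
    · intro s hs
      exact ((hg s hs.1).continuousAt).continuousWithinAt
    · rw [interior_Icc]
      intro s hs
      exact ((hg s hs.1.le).differentiableAt).differentiableWithinAt
    · rw [interior_Icc]
      intro s hs
      rw [(hg s hs.1.le).deriv]
      exact mul_nonneg (Real.exp_nonneg _) (hV k (b s)).1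
  have hlow : 0 ≤ b t k := by
    have := hmono (Set.left_mem_Icc.2 ht) (Set.right_mem_Icc.2 ht) ht
    simp only [mul_zero, Real.exp_zero, one_mul] at this
    have h0 := (hb0 k).1
    nlinarith [Real.exp_pos (c * t)]
  -- upper bound
  have hanti : AntitoneOn (fun u => Real.exp (c * u) * b u k - Real.exp (c * u))
      (Set.Icc 0 t) := by
    apply antitoneOn_of_deriv_nonpos (convex_Icc 0 t)
    · intro s hs
      exact (((hg s hs.1).sub (he s)).continuousAt).continuousWithinAt
    · rw [interior_Icc]
      intro s hs
      exact (((hg s hs.1.le).sub (he s)).differentiableAt).differentiableWithinAt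
    · rw [interior_Icc]
      intro s hs
      have hd : HasDerivAt (fun u => Real.exp (c * u) * b u k - Real.exp (c * u)) _ s := (hg s hs.1.le).sub (he s)
      rw [hd.deriv]
      have hVs := (hV k (b s)).2
      have he := Real.exp_pos (c * s)
      nlinarith
  have hhigh : b t k ≤ 1 := by
    have := hanti (Set.left_mem_Icc.2 ht) (Set.right_mem_Icc.2 ht) ht
    simp only [mul_zero, Real.exp_zero, one_mul] at this
    have h1 := (hb0 k).2
    nlinarith [Real.exp_pos (c * t)]
  exact ⟨hlow, hhigh⟩
end

section
/- Let V, W : ℝ → ℝ be continuous with V(x) ≥ 0 and W(x) ≥ 0 for all x. Suppose b, g : ℝ → ℝ are differentiable on [0, ∞), satisfy b'(t) = V(g(t)) and g'(t) = W(b(t)) for all t ≥ 0, and (b(t), g(t)) ∈ [0,1]² for all t ≥ 0. Then there exist b∞, g∞ ∈ [0,1] such that b(t) → b∞ and g(t) → g∞ as t → ∞, and (b∞, g∞) is a stationary point of the system: V(g∞) = 0 and W(b∞) = 0. Thus every trajectory that remains in the unit square converges (from the left and below) to a stationary point. -/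
open Filter Topology

/-- A function with nonnegative derivative on `Ici a` is monotone there. -/
lemma mono_of_deriv_nonneg_aux (f f' : ℝ → ℝ) (a : ℝ)
    (h : ∀ t ∈ Set.Ici a, HasDerivAt f (f' t) t)
    (h' : ∀ t ∈ Set.Ici a, 0 ≤ f' t) : MonotoneOn f (Set.Ici a) := by
  apply monotoneOn_of_deriv_nonneg (convex_Ici a)
    (fun t ht => (h t ht).continuousAt.continuousWithinAt)
  · intro t ht
    rw [interior_Ici] at ht
    exact ((h t (Set.mem_Ici.2 (le_of_lt ht))).differentiableAt).differentiableWithinAt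
  · intro t ht
    rw [interior_Ici] at ht
    rw [(h t (Set.mem_Ici.2 (le_of_lt ht))).deriv]
    exact h' t (Set.mem_Ici.2 (le_of_lt ht))

/-- Key convergence lemma for one coordinate. -/
lemma coord_converges (f F : ℝ → ℝ)
    (hder : ∀ t, 0 ≤ t → HasDerivAt f (F t) t)
    (hF : ∀ t, 0 ≤ t → 0 ≤ F t)
    (hbd : ∀ t, 0 ≤ t → f t ∈ Set.Icc (0 : ℝ) 1) :
    ∃ l ∈ Set.Icc (0 : ℝ) 1, Tendsto f atTop (𝓝 l) := by
  have hmono : MonotoneOn f (Set.Ici 0) :=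
    mono_of_deriv_nonneg_aux f F 0 (fun t ht => hder t ht) (fun t ht => hF t ht)
  set B : ℝ → ℝ := fun t => f (max t 0) with hB
  have hBmono : Monotone B := fun s t hst =>
    hmono (Set.mem_Ici.2 (le_max_right s 0)) (Set.mem_Ici.2 (le_max_right t 0))
      (max_le_max hst le_rfl)
  have hBbd : BddAbove (Set.range B) := by
    refine ⟨1, ?_⟩
    rintro x ⟨t, rfl⟩
    exact (hbd _ (le_max_right t 0)).2
  have hBtd : Tendsto B atTop (𝓝 (⨆ t, B t)) := tendsto_atTop_ciSup hBmono hBbd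
  have heq : f =ᶠ[atTop] B := by
    filter_upwards [eventually_ge_atTop (0 : ℝ)] with t ht
    simp [hB, max_eq_left ht]
  refine ⟨⨆ t, B t, ⟨?_, ?_⟩, Tendsto.congr' heq.symm hBtd⟩
  · have h0 : (0:ℝ) ≤ B 0 := (hbd _ (le_max_right 0 0)).1
    exact h0.trans (le_ciSup hBbd 0)
  · exact ciSup_le fun t => (hbd _ (le_max_right t 0)).2

/-- If `f` stays ≤ 1 on `[0,∞)` with `f ≥ 0`, derivative `F t`, and `F` bounded below
by a positive constant eventually, contradiction. -/
lemma deriv_limit_zero (f F : ℝ → ℝ)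
    (hder : ∀ t, 0 ≤ t → HasDerivAt f (F t) t)
    (hbd : ∀ t, 0 ≤ t → f t ∈ Set.Icc (0 : ℝ) 1)
    (c : ℝ) (hc : 0 < c)
    (hev : ∀ᶠ t in atTop, c / 2 ≤ F t) : False := by
  obtain ⟨T, hT⟩ := (hev.and (eventually_ge_atTop (0 : ℝ))).exists_forall_of_atTop
  have hT0 : 0 ≤ T := (hT T le_rfl).2
  set h : ℝ → ℝ := fun t => f t - c / 2 * t with hh
  have hmono : MonotoneOn h (Set.Ici T) := by
    apply mono_of_deriv_nonneg_aux h (fun t => F t - c / 2) T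
    · intro t ht
      exact ((hder t (hT0.trans ht)).sub ((hasDerivAt_id t).const_mul (c / 2))).congr_deriv
        (by ring)
    · intro t ht
      linarith [(hT t ht).1]
  have hpos : 0 < 4 / c := by positivity
  have key := hmono (Set.self_mem_Ici) (Set.mem_Ici.2 (by linarith : T ≤ T + 4 / c))
    (by linarith : T ≤ T + 4 / c)
  have h1 : c / 2 * (T + 4 / c) = c / 2 * T + 2 := by field_simp; ring
  have h2 : f (T + 4 / c) ≤ 1 := (hbd _ (by linarith)).2
  have h3 : 0 ≤ f T := (hbd T hT0).1
  simp only [hh] at key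
  linarith

/-- For the two-sided platform model without same-side network effect,
`b' = V(g)`, `g' = W(b)` with `V, W` continuous and nonnegative, every trajectory
that remains in the unit square converges to a stationary point `(b∞, g∞)`, i.e.,
`V(g∞) = 0` and `W(b∞) = 0`. -/
theorem bounded_trajectory_converges_to_stationary
    (V W : ℝ → ℝ) (hVc : Continuous V) (hWc : Continuous W)
    (hV : ∀ x, 0 ≤ V x) (hW : ∀ x, 0 ≤ W x)
    (b g : ℝ → ℝ)
    (hb : ∀ t, 0 ≤ t → HasDerivAt b (V (g t)) t)
    (hg : ∀ t, 0 ≤ t → HasDerivAt g (W (b t)) t)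
    (hsquare : ∀ t, 0 ≤ t → b t ∈ Set.Icc (0 : ℝ) 1 ∧ g t ∈ Set.Icc (0 : ℝ) 1) :
    ∃ binf ginf : ℝ, binf ∈ Set.Icc (0 : ℝ) 1 ∧ ginf ∈ Set.Icc (0 : ℝ) 1 ∧
      Tendsto b atTop (𝓝 binf) ∧ Tendsto g atTop (𝓝 ginf) ∧
      V ginf = 0 ∧ W binf = 0 := by
  obtain ⟨binf, hbinf, hbt⟩ := coord_converges b (fun t => V (g t)) hb
    (fun t _ => hV _) (fun t ht => (hsquare t ht).1)
  obtain ⟨ginf, hginf, hgt⟩ := coord_converges g (fun t => W (b t)) hg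
    (fun t _ => hW _) (fun t ht => (hsquare t ht).2)
  refine ⟨binf, ginf, hbinf, hginf, hbt, hgt, ?_, ?_⟩
  · by_contra hne
    have hc : 0 < V ginf := lt_of_le_of_ne (hV ginf) (Ne.symm hne)
    have htd : Tendsto (fun t => V (g t)) atTop (𝓝 (V ginf)) :=
      (hVc.continuousAt.tendsto).comp hgt
    have hev : ∀ᶠ t in atTop, V ginf / 2 ≤ V (g t) :=
      htd.eventually (eventually_ge_nhds (by linarith))
    exact deriv_limit_zero b (fun t => V (g t)) hb (fun t ht => (hsquare t ht).1)
      (V ginf) hc hev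
  · by_contra hne
    have hc : 0 < W binf := lt_of_le_of_ne (hW binf) (Ne.symm hne)
    have htd : Tendsto (fun t => W (b t)) atTop (𝓝 (W binf)) :=
      (hWc.continuousAt.tendsto).comp hbt
    have hev : ∀ᶠ t in atTop, W binf / 2 ≤ W (b t) :=
      htd.eventually (eventually_ge_nhds (by linarith))
    exact deriv_limit_zero g (fun t => W (b t)) hg (fun t ht => (hsquare t ht).2)
      (W binf) hc hev
end

section
/- Let V, W : ℝ → ℝ be continuous with V(x) ≥ 0 and W(x) ≥ 0 for all x, and additionally V(x) > 0 and W(x) > 0 for all x ∈ (0,1]. Suppose b, g : ℝ → ℝ are differentiable on [0, ∞) and satisfy b'(t) = V(g(t)) and g'(t) = W(b(t)) for all t ≥ 0, with b(0) ∈ (0,1] and g(0) ∈ (0,1]. Then it is not the case that (b(t), g(t)) ∈ [0,1]² for all t ≥ 0: the trajectory escapes the unit square in finite time. -/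
lemma mono_of_deriv_nonneg' (f f' : ℝ → ℝ)
    (hf : ∀ t, 0 ≤ t → HasDerivAt f (f' t) t)
    (hf' : ∀ t, 0 ≤ t → 0 ≤ f' t) : MonotoneOn f (Set.Ici 0) := by
  apply monotoneOn_of_deriv_nonneg (convex_Ici 0)
  · exact fun t ht => (hf t ht).continuousAt.continuousWithinAt
  · intro t ht
    rw [interior_Ici] at ht
    exact (hf t ht.le).differentiableAt.differentiableWithinAt
  · intro t ht
    rw [interior_Ici] at ht
    rw [(hf t ht.le).deriv]
    exact hf' t ht.le

/-- For the two-sided platform model without same-side network effect,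
`b' = V(g)`, `g' = W(b)`, with `V, W` continuous, nonnegative, and strictly positive
on `(0,1]`, a trajectory starting with positive volume on each side cannot remain in
the unit square: it escapes in finite time. -/
theorem trajectory_escapes_unit_square
    (V W : ℝ → ℝ) (hVc : Continuous V) (hWc : Continuous W)
    (hV : ∀ x, 0 ≤ V x) (hW : ∀ x, 0 ≤ W x)
    (hVpos : ∀ x, x ∈ Set.Ioc (0 : ℝ) 1 → 0 < V x)
    (hWpos : ∀ x, x ∈ Set.Ioc (0 : ℝ) 1 → 0 < W x)
    (b g : ℝ → ℝ)
    (hb : ∀ t, 0 ≤ t → HasDerivAt b (V (g t)) t)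
    (hg : ∀ t, 0 ≤ t → HasDerivAt g (W (b t)) t)
    (hb0 : b 0 ∈ Set.Ioc (0 : ℝ) 1) (hg0 : g 0 ∈ Set.Ioc (0 : ℝ) 1) :
    ¬ (∀ t, 0 ≤ t → b t ∈ Set.Icc (0 : ℝ) 1 ∧ g t ∈ Set.Icc (0 : ℝ) 1) := by
  intro h
  obtain ⟨hb0p, hb0le⟩ := hb0
  obtain ⟨hg0p, hg0le⟩ := hg0
  have hgmono : MonotoneOn g (Set.Ici 0) :=
    mono_of_deriv_nonneg' g (fun t => W (b t)) hg (fun t _ => hW _)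
  obtain ⟨x₀, hx₀, hmin⟩ := (isCompact_Icc (a := g 0) (b := 1)).exists_isMinOn
    ⟨g 0, le_refl _, hg0le⟩ hVc.continuousOn
  set c := V x₀ with hc
  have hcpos : 0 < c := hVpos x₀ ⟨lt_of_lt_of_le hg0p hx₀.1, hx₀.2⟩
  have hVge : ∀ t, 0 ≤ t → c ≤ V (g t) := by
    intro t ht
    exact hmin ⟨hgmono (Set.mem_Ici.2 le_rfl) (Set.mem_Ici.2 ht) ht, (h t ht).2.2⟩
  have hlin : MonotoneOn (fun t => b t - c * t) (Set.Ici 0) := by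
    apply mono_of_deriv_nonneg' _ (fun t => V (g t) - c)
    · intro t ht
      have h1 := (hb t ht).sub ((hasDerivAt_id t).const_mul c)
      rw [mul_one] at h1
      exact h1
    · intro t ht
      exact sub_nonneg.2 (hVge t ht)
  have ht0 : (0:ℝ) ≤ 2 / c := by positivity
  have := hlin (Set.mem_Ici.2 le_rfl) (Set.mem_Ici.2 ht0) ht0
  simp only [mul_zero, sub_zero] at this
  have hcc : c * (2 / c) = 2 := by field_simp
  rw [hcc] at this
  have hble : b (2 / c) ≤ 1 := (h _ ht0).1.2
  linarith
end
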